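/- Let A be an n×n symmetric irreducible matrix whose comparison matrix Ā is positive semidefinite. Then every proper principal submatrix of Ā (and hence of A) is positive definite. -/

import Mathlib

open Matrix

/-- The comparison matrix of a square matrix. -/
def comparisonMatrix {n : Type*} [DecidableEq n] (M : Matrix n n ℝ) : Matrix n n ℝ :=
  fun i j => if i = j then M i i else -|M i j|

/-- A matrix is irreducible iff any two distinct indices are connected by a chain
of nonzero entries. -/
def MatrixIrreducible {n : Type*} (A : Matrix n n ℝ) : Prop :=
  ∀ i j : n, i ≠ j → Relation.TransGen (fun a b => A a b ≠ 0) i j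

private lemma quad_expand {m : Type*} [Fintype m] (N : Matrix m m ℝ) (v : m → ℝ) :
    v ⬝ᵥ (N *ᵥ v) = ∑ i, ∑ j, v i * (N i j * v j) := by
  simp [dotProduct, mulVec, Finset.mul_sum]

theorem proper_principal_submatrices_posDef
    {n : ℕ} (A : Matrix (Fin n) (Fin n) ℝ) (hsym : A.IsSymm)
    (hirr : MatrixIrreducible A)
    (hcmp : (comparisonMatrix A).PosSemidef)
    (α : Finset (Fin n)) (hα : α ≠ Finset.univ) :
    ((comparisonMatrix A).submatrix (Subtype.val : {x // x ∈ α} → Fin n)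
        (Subtype.val : {x // x ∈ α} → Fin n)).PosDef ∧
      (A.submatrix (Subtype.val : {x // x ∈ α} → Fin n)
        (Subtype.val : {x // x ∈ α} → Fin n)).PosDef := by
  classical
  obtain ⟨j0, hj0⟩ : ∃ j, j ∉ α := by
    by_contra h
    push_neg at h
    exact hα (Finset.eq_univ_iff_forall.mpr h)
  set M := comparisonMatrix A with hMdef
  -- extension of a vector on α by zero
  set ext : ({a // a ∈ α} → ℝ) → (Fin n → ℝ) :=
    fun x i => if h : i ∈ α then x ⟨i, h⟩ else 0 with hextdef
  have ext_apply : ∀ (x : {a // a ∈ α} → ℝ) (i : {a // a ∈ α}), ext x i.1 = x i := by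
    intro x i
    simp [hextdef, i.2]
  have sum_ext : ∀ (f : Fin n → ℝ), (∀ i ∉ α, f i = 0) →
      ∑ i, f i = ∑ i : {a // a ∈ α}, f i.1 := by
    intro f hf
    rw [← Finset.sum_subtype α (fun _ => Iff.rfl) f]
    exact (Finset.sum_subset (Finset.subset_univ α) (fun i _ hi => hf i hi)).symm
  have ext_quad : ∀ (N : Matrix (Fin n) (Fin n) ℝ) (x : {a // a ∈ α} → ℝ),
      (ext x) ⬝ᵥ (N *ᵥ ext x)
        = x ⬝ᵥ ((N.submatrix Subtype.val Subtype.val) *ᵥ x) := by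
    intro N x
    rw [quad_expand, quad_expand]
    rw [sum_ext _ (fun i hi => by simp [hextdef, dif_neg hi])]
    refine Finset.sum_congr rfl fun i _ => ?_
    rw [sum_ext _ (fun j hj => by simp [hextdef, dif_neg hj])]
    refine Finset.sum_congr rfl fun j _ => ?_
    rw [ext_apply, ext_apply]
    rfl
  -- termwise inequalities
  have term_ineq_M : ∀ (i j : Fin n) (a b : ℝ), (i = j → a = b) →
      M i j * (|a| * |b|) ≤ M i j * (a * b) := by
    intro i j a b hab
    by_cases h : i = j
    · subst h
      rw [hab rfl, abs_mul_abs_self]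
    · have hM : M i j = -|A i j| := by simp [hMdef, comparisonMatrix, h]
      have h1 : a * b ≤ |a| * |b| := by
        rw [← abs_mul]; exact le_abs_self _
      rw [hM]
      nlinarith [abs_nonneg (A i j)]
  have term_ineq_A : ∀ (i j : Fin n) (a b : ℝ), (i = j → a = b) →
      M i j * (|a| * |b|) ≤ A i j * (a * b) := by
    intro i j a b hab
    by_cases h : i = j
    · subst h
      rw [hab rfl, abs_mul_abs_self]
      simp [hMdef, comparisonMatrix]
    · have hM : M i j = -|A i j| := by simp [hMdef, comparisonMatrix, h]
      rw [hM]
      have : -(|A i j| * (|a| * |b|)) = -|A i j * (a * b)| := by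
        rw [abs_mul, abs_mul]
      nlinarith [neg_abs_le (A i j * (a * b))]
  -- positive definiteness of the comparison submatrix
  have hMpd : (M.submatrix (Subtype.val : {x // x ∈ α} → Fin n) Subtype.val).PosDef := by
    refine PosDef.of_dotProduct_mulVec_pos (hcmp.1.submatrix _) ?_
    intro x hx
    set z : {a // a ∈ α} → ℝ := fun i => |x i| with hzdef
    set y : Fin n → ℝ := ext z with hydef
    have hynn : ∀ i, 0 ≤ y i := by
      intro i
      by_cases h : i ∈ α <;> simp [hydef, hextdef, h, hzdef, abs_nonneg]
    have h0 : 0 ≤ y ⬝ᵥ (M *ᵥ y) := by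
      have := hcmp.dotProduct_mulVec_nonneg y
      simpa using this
    have hz_quad : y ⬝ᵥ (M *ᵥ y)
        = z ⬝ᵥ ((M.submatrix Subtype.val Subtype.val) *ᵥ z) := ext_quad M z
    have hzx : z ⬝ᵥ ((M.submatrix Subtype.val Subtype.val) *ᵥ z)
        ≤ x ⬝ᵥ ((M.submatrix Subtype.val Subtype.val) *ᵥ x) := by
      rw [quad_expand, quad_expand]
      refine Finset.sum_le_sum fun i _ => Finset.sum_le_sum fun j _ => ?_
      have := term_ineq_M i.1 j.1 (x i) (x j)
        (fun h => by rw [Subtype.ext h])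
      simp only [hzdef, submatrix_apply]
      nlinarith [this]
    rcases lt_or_eq_of_le h0 with hpos | heq
    · rw [hz_quad] at hpos
      simp only [star_trivial]
      linarith
    · exfalso
      have hker : M *ᵥ y = 0 := by
        rw [← hcmp.dotProduct_mulVec_zero_iff y]
        simpa using heq.symm
      have prop : ∀ k, y k = 0 → ∀ m, A k m ≠ 0 → y m = 0 := by
        intro k hk m hm
        have hMk : ∑ l, M k l * y l = 0 := by
          have := congrFun hker k
          simpa [mulVec, dotProduct] using this
        have hsum : ∑ l ∈ Finset.univ.erase k, M k l * y l = 0 := by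
          have := Finset.sum_erase_add Finset.univ (fun l => M k l * y l)
            (Finset.mem_univ k)
          rw [hMk] at this
          simpa [hk] using this
        have hsum' : ∑ l ∈ Finset.univ.erase k, |A k l| * y l = 0 := by
          have : ∑ l ∈ Finset.univ.erase k, M k l * y l
              = -∑ l ∈ Finset.univ.erase k, |A k l| * y l := by
            rw [← Finset.sum_neg_distrib]
            refine Finset.sum_congr rfl fun l hl => ?_
            have hne : k ≠ l := fun h => (Finset.mem_erase.mp hl).1 h.symm
            simp [hMdef, comparisonMatrix, hne]
          rw [this] at hsum
          linarith
        by_cases hmk : m = k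
        · rwa [hmk]
        · have hmem : m ∈ Finset.univ.erase k := Finset.mem_erase.mpr ⟨hmk, Finset.mem_univ m⟩
          have hterm : |A k m| * y m = 0 := by
            have hnn : ∀ l ∈ Finset.univ.erase k, 0 ≤ |A k l| * y l :=
              fun l _ => mul_nonneg (abs_nonneg _) (hynn l)
            exact (Finset.sum_eq_zero_iff_of_nonneg hnn).mp hsum' m hmem
          have : |A k m| ≠ 0 := fun h => hm (abs_eq_zero.mp h)
          exact (mul_eq_zero.mp hterm).resolve_left this
      have hyj0 : y j0 = 0 := by simp [hydef, hextdef, hj0]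
      have ychain : ∀ i, Relation.TransGen (fun a b => A a b ≠ 0) j0 i → y i = 0 := by
        intro i h
        induction h with
        | single hab => exact prop j0 hyj0 _ hab
        | tail _ hbc ih => exact prop _ ih _ hbc
      have yall : ∀ i, y i = 0 := by
        intro i
        by_cases h : i = j0
        · rw [h]; exact hyj0
        · exact ychain i (hirr j0 i (Ne.symm h))
      apply hx
      funext i
      have hz0 : z i = 0 := by
        have := yall i.1
        rwa [hydef, ext_apply] at this
      show x i = 0
      exact abs_eq_zero.mp hz0
  refine ⟨hMpd, ?_⟩
  have hAherm : A.IsHermitian := by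
    rw [Matrix.IsHermitian, conjTranspose_eq_transpose_of_trivial]
    exact hsym.eq
  refine PosDef.of_dotProduct_mulVec_pos (hAherm.submatrix _) ?_
  intro x hx
  set z : {a // a ∈ α} → ℝ := fun i => |x i| with hzdef
  have hz : z ≠ 0 := by
    intro h
    apply hx
    funext i
    have : z i = 0 := congrFun h i
    show x i = 0
    exact abs_eq_zero.mp this
  have hpos := hMpd.dotProduct_mulVec_pos hz
  simp only [star_trivial] at hpos ⊢
  have hle : z ⬝ᵥ ((M.submatrix Subtype.val Subtype.val) *ᵥ z)
      ≤ x ⬝ᵥ ((A.submatrix Subtype.val Subtype.val) *ᵥ x) := by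
    rw [quad_expand, quad_expand]
    refine Finset.sum_le_sum fun i _ => Finset.sum_le_sum fun j _ => ?_
    have := term_ineq_A i.1 j.1 (x i) (x j) (fun h => by rw [Subtype.ext h])
    simp only [hzdef, submatrix_apply]
    nlinarith [this]
  linarith
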